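/- Let R be an integral domain with fraction field K, M a finitely generated free R-module of rank m, and X a closed subset of affine m-space over R with vanishing ideal I ⊆ R[x_1,...,x_m]. Then there exists a nonzero r ∈ R such that for any f ∈ R[x_1,...,x_m]: if f vanishes identically on X(\bar{K}), then f vanishes identically on X(\bar{K_p}) for all primes p ∈ Spec(R[1/r]). -/

import Mathlib

open MvPolynomial

/-- The zero set, in `F^m`, of (the image under `ρ` of) an ideal of `R[x_1,...,x_m]`. -/
def zeroSet {R F : Type*} [CommRing R] [CommRing F] {m : ℕ}
    (I : Ideal (MvPolynomial (Fin m) R)) (ρ : R →+* F) : Set (Fin m → F) :=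
  {x | ∀ f ∈ I, MvPolynomial.eval x (MvPolynomial.map ρ f) = 0}

set_option linter.unusedSectionVars false

open MvPolynomial

noncomputable section Helpers

variable {σ : Type*} {K : Type*} [Field K]

variable (mo : MonomialOrder σ)

/-- degree of a polynomial w.r.t. a monomial order -/
noncomputable def mdeg (f : MvPolynomial σ K) : σ →₀ ℕ :=
  mo.toSyn.symm (f.support.sup mo.toSyn)

lemma toSyn_mdeg (f : MvPolynomial σ K) :
    mo.toSyn (mdeg mo f) = f.support.sup mo.toSyn := by
  simp [mdeg]

lemma mdeg_mem_support {f : MvPolynomial σ K} (hf : f ≠ 0) : mdeg mo f ∈ f.support := by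
  obtain ⟨b, hb, hb2⟩ := Finset.exists_mem_eq_sup f.support
    (Finset.nonempty_iff_ne_empty.mpr (fun h => hf (support_eq_empty.mp h))) mo.toSyn
  have : mdeg mo f = b := by simp [mdeg, hb2]
  rwa [this]

lemma toSyn_le_mdeg {f : MvPolynomial σ K} {s : σ →₀ ℕ} (hs : s ∈ f.support) :
    mo.toSyn s ≤ mo.toSyn (mdeg mo f) := by
  rw [toSyn_mdeg]; exact Finset.le_sup hs

lemma coeff_mdeg_ne_zero {f : MvPolynomial σ K} (hf : f ≠ 0) :
    coeff (mdeg mo f) f ≠ 0 := by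
  simpa [MvPolynomial.mem_support_iff] using mdeg_mem_support mo hf

lemma mdeg_support_congr {f g : MvPolynomial σ K} (h : f.support = g.support) :
    mdeg mo f = mdeg mo g := by simp [mdeg, h]

/-- membership in a span of monomials forces divisibility of exponents -/
lemma exists_divides_of_mem_monomial_span {T : Finset (MvPolynomial σ K)}
    (hT : ∀ g ∈ T, ∃ d : σ →₀ ℕ, g = monomial d 1)
    {e : σ →₀ ℕ} (he : (monomial e 1 : MvPolynomial σ K) ∈ Ideal.span (T : Set (MvPolynomial σ K))) :
    ∃ d : σ →₀ ℕ, (monomial d 1 : MvPolynomial σ K) ∈ T ∧ d ≤ e := by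
  classical
  rw [Ideal.span, Submodule.mem_span_finset] at he
  obtain ⟨c, hc⟩ := he
  have h1 : (1 : K) ≠ 0 := one_ne_zero
  have : ∃ g ∈ T, coeff e (c g • g) ≠ 0 := by
    by_contra h
    push_neg at h
    have : coeff e (∑ i ∈ T, c i • i) = 0 := by
      rw [MvPolynomial.coeff_sum]
      exact Finset.sum_eq_zero h
    rw [hc.2, coeff_monomial] at this
    simp at this
  obtain ⟨g, hgT, hg⟩ := this
  obtain ⟨d, rfl⟩ := hT g hgT
  refine ⟨d, hgT, ?_⟩
  have hmem : e ∈ (c ((monomial d) (1:K)) * (monomial d) (1:K)).support := by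
    rw [MvPolynomial.mem_support_iff]; simpa [smul_eq_mul] using hg
  have := MvPolynomial.support_mul (c ((monomial d) (1:K))) ((monomial d) (1:K)) hmem
  rw [Finset.mem_add] at this
  obtain ⟨a, ha, b, hb, rfl⟩ := this
  have : b = d := by
    have := MvPolynomial.support_monomial_subset hb
    simpa using this
  subst this
  exact le_add_self

end Helpers
noncomputable section Helpers4

variable {σ : Type*} {K : Type*} [Field K]

lemma exists_groebner_cover [Finite σ] (mo : MonomialOrder σ) (J : Ideal (MvPolynomial σ K)) :
    ∃ B : Finset (MvPolynomial σ K),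
      (∀ b ∈ B, b ∈ J ∧ coeff (mdeg mo b) b = 1) ∧
      (∀ f : MvPolynomial σ K, f ∈ J → f ≠ 0 → ∃ b ∈ B, mdeg mo b ≤ mdeg mo f) := by
  classical
  set S : Set (MvPolynomial σ K) :=
    (fun d => (monomial d 1 : MvPolynomial σ K)) '' (mdeg mo '' {f | f ∈ J ∧ f ≠ 0}) with hS
  obtain ⟨G, hG⟩ := IsNoetherian.noetherian (Ideal.span S)
  have hmem : ∀ g ∈ G, ∃ T : Finset (MvPolynomial σ K), ↑T ⊆ S ∧ g ∈ Ideal.span (↑T : Set (MvPolynomial σ K)) := by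
    intro g hg
    have hgS : g ∈ Ideal.span S := hG ▸ Ideal.subset_span hg
    obtain ⟨T, hTS, hgT⟩ := Submodule.mem_span_finite_of_mem_span hgS
    exact ⟨T, hTS, hgT⟩
  choose T hT1 hT2 using hmem
  set T0 : Finset (MvPolynomial σ K) := G.attach.biUnion (fun g => T g.1 g.2) with hT0def
  have hT0S : (↑T0 : Set (MvPolynomial σ K)) ⊆ S := by
    intro u hu
    rw [hT0def] at hu
    simp only [Finset.coe_biUnion, Set.mem_iUnion, Finset.mem_coe] at hu
    obtain ⟨g, _, hg2⟩ := hu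
    exact hT1 g.1 g.2 hg2
  have hspan : Ideal.span S ≤ Ideal.span (↑T0 : Set (MvPolynomial σ K)) := by
    rw [← hG]
    show Ideal.span (↑G : Set (MvPolynomial σ K)) ≤ _
    rw [Ideal.span_le]
    intro g hg
    refine Ideal.span_mono ?_ (hT2 g hg)
    intro u hu
    rw [hT0def]
    simp only [Finset.coe_biUnion, Set.mem_iUnion, Finset.mem_coe]
    exact ⟨⟨g, hg⟩, Finset.mem_attach _ _, hu⟩
  have hwit : ∀ u ∈ T0, ∃ b : MvPolynomial σ K, b ∈ J ∧ coeff (mdeg mo b) b = 1 ∧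
      (monomial (mdeg mo b) 1 : MvPolynomial σ K) = u := by
    intro u hu
    obtain ⟨d, ⟨f, ⟨hfJ, hf0⟩, hdf⟩, rfl⟩ := hT0S hu
    have hne := coeff_mdeg_ne_zero mo hf0
    have hsupp : ((coeff (mdeg mo f) f)⁻¹ • f).support = f.support :=
      MvPolynomial.support_smul_eq (inv_ne_zero hne) f
    have hmd : mdeg mo ((coeff (mdeg mo f) f)⁻¹ • f) = mdeg mo f := mdeg_support_congr mo hsupp
    refine ⟨(coeff (mdeg mo f) f)⁻¹ • f, by rw [smul_eq_C_mul]; exact Ideal.mul_mem_left _ _ hfJ, ?_, ?_⟩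
    · rw [hmd, MvPolynomial.coeff_smul, smul_eq_mul, inv_mul_cancel₀ hne]
    · rw [hmd, hdf]
  choose bb hbb using hwit
  refine ⟨T0.attach.image (fun u => bb u.1 u.2), ?_, ?_⟩
  · intro b hb
    obtain ⟨u, _, rfl⟩ := Finset.mem_image.mp hb
    exact ⟨(hbb u.1 u.2).1, (hbb u.1 u.2).2.1⟩
  · intro f hfJ hf0
    have hmonS : (monomial (mdeg mo f) 1 : MvPolynomial σ K) ∈ Ideal.span (↑T0 : Set (MvPolynomial σ K)) :=
      hspan (Ideal.subset_span ⟨mdeg mo f, ⟨f, ⟨hfJ, hf0⟩, rfl⟩, rfl⟩)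
    have hTmon : ∀ g ∈ T0, ∃ d : σ →₀ ℕ, g = monomial d 1 := by
      intro g hg
      obtain ⟨d, _, rfl⟩ := hT0S hg
      exact ⟨d, rfl⟩
    obtain ⟨d, hdT0, hde⟩ := exists_divides_of_mem_monomial_span hTmon hmonS
    refine ⟨bb _ hdT0, Finset.mem_image.mpr ⟨⟨_, hdT0⟩, Finset.mem_attach _ _, rfl⟩, ?_⟩
    have := (hbb _ hdT0).2.2
    have hmdeq : mdeg mo (bb _ hdT0) = d :=
      MvPolynomial.monomial_left_injective (one_ne_zero) this
    rw [hmdeq]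
    exact hde

end Helpers4

noncomputable section Helpers5

variable {σ : Type*} {R : Type*} [CommRing R] [IsDomain R] {K : Type*} [Field K]
  [Algebra R K] [IsFractionRing R K]

lemma division_lemma (mo : MonomialOrder σ) (J : Ideal (MvPolynomial σ K))
    (B : Finset (MvPolynomial σ K))
    (hB : ∀ b ∈ B, b ∈ J ∧ coeff (mdeg mo b) b = 1)
    (hcover : ∀ f : MvPolynomial σ K, f ∈ J → f ≠ 0 → ∃ b ∈ B, mdeg mo b ≤ mdeg mo f)
    (t : R) (ht : t ≠ 0) (g : MvPolynomial σ K → MvPolynomial σ R)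
    (hg : ∀ b ∈ B, map (algebraMap R K) (g b) = C (algebraMap R K t) * b) :
    ∀ f : MvPolynomial σ R, map (algebraMap R K) f ∈ J →
      ∃ n : ℕ, (t ^ n : R) • f ∈ Ideal.span (g '' (B : Set (MvPolynomial σ K))) := by
  classical
  set ι := algebraMap R K with hι
  have hinj : Function.Injective (map ι : MvPolynomial σ R →+* MvPolynomial σ K) :=
    MvPolynomial.map_injective ι (IsFractionRing.injective R K)
  have hιt : ι t ≠ 0 := fun h0 => ht (IsFractionRing.injective R K (by rw [h0, map_zero]))
  suffices main : ∀ δ : mo.syn, ∀ f : MvPolynomial σ R, map ι f ∈ J →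
      mo.toSyn (mdeg mo (map ι f)) = δ →
      ∃ n : ℕ, (t ^ n : R) • f ∈ Ideal.span (g '' (B : Set (MvPolynomial σ K))) by
    intro f hf
    exact main _ f hf rfl
  intro δ
  induction δ using WellFoundedLT.induction with
  | _ δ IH =>
    intro f hfJ hδ
    by_cases hf0 : f = 0
    · exact ⟨0, by rw [hf0, smul_zero]; exact (Ideal.span _).zero_mem⟩
    have hfK0 : map ι f ≠ 0 := fun h => hf0 (hinj (by rw [h, map_zero]))
    obtain ⟨b, hbB, hble⟩ := hcover (map ι f) hfJ hfK0
    obtain ⟨hbJ, hbmonic⟩ := hB b hbB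
    have hb0 : b ≠ 0 := fun h => by simp [h] at hbmonic
    set e : σ →₀ ℕ := mdeg mo (map ι f) - mdeg mo b with he
    have hesum : e + mdeg mo b = mdeg mo (map ι f) := by
      rw [he, add_comm]; exact add_tsub_cancel_of_le hble
    set a : R := coeff (mdeg mo (map ι f)) f with ha
    have hago : ι a = coeff (mdeg mo (map ι f)) (map ι f) := (MvPolynomial.coeff_map ι f _).symm
    set h : MvPolynomial σ K := map ι f - monomial e (ι a) * b with hh
    set f' : MvPolynomial σ R := t • f - monomial e a * g b with hf'
    have hf'K : map ι f' = C (ι t) * h := by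
      rw [hf', map_sub, hh, smul_eq_C_mul, map_mul, map_C, map_mul, map_monomial, hg b hbB]
      ring
    have hhJ : h ∈ J := Submodule.sub_mem _ hfJ (Ideal.mul_mem_left _ _ hbJ)
    have htop : coeff (mdeg mo (map ι f)) h = 0 := by
      rw [hh, MvPolynomial.coeff_sub, ← hesum, MvPolynomial.coeff_monomial_mul, hbmonic,
        mul_one, hesum, ← hago, sub_self]
    have hstrict : ∀ s : σ →₀ ℕ, coeff s h ≠ 0 → mo.toSyn s < mo.toSyn (mdeg mo (map ι f)) := by
      intro s hs
      have hne : s ≠ mdeg mo (map ι f) := fun h' => hs (h' ▸ htop)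
      have hle : mo.toSyn s ≤ mo.toSyn (mdeg mo (map ι f)) := by
        have hor : coeff s (map ι f) ≠ 0 ∨ coeff s ((monomial e (ι a)) * b) ≠ 0 := by
          by_contra hc
          push_neg at hc
          exact hs (by rw [hh, MvPolynomial.coeff_sub, hc.1, hc.2, sub_zero])
        rcases hor with h1 | h2
        · exact toSyn_le_mdeg mo (MvPolynomial.mem_support_iff.mpr h1)
        · have hmem := MvPolynomial.support_mul _ _ (MvPolynomial.mem_support_iff.mpr h2)
          rw [Finset.mem_add] at hmem
          obtain ⟨x, hx, y, hy, rfl⟩ := hmem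
          have hxe : x = e := by simpa using MvPolynomial.support_monomial_subset hx
          subst hxe
          calc mo.toSyn (e + y) = mo.toSyn e + mo.toSyn y := map_add _ _ _
            _ ≤ mo.toSyn e + mo.toSyn (mdeg mo b) := add_le_add_right (toSyn_le_mdeg mo hy) _
            _ = mo.toSyn (e + mdeg mo b) := (map_add _ _ _).symm
            _ = mo.toSyn (mdeg mo (map ι f)) := by rw [hesum]
      exact lt_of_le_of_ne hle (fun hcon => hne (mo.toSyn.injective hcon))
    by_cases hh0 : h = 0
    · have hmap0 : map ι f' = 0 := by rw [hf'K, hh0, mul_zero]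
      have hf'0 : f' = 0 := hinj (by rw [hmap0, map_zero])
      have heq : t • f = monomial e a * g b := by
        rw [hf'] at hf'0
        exact sub_eq_zero.mp hf'0
      refine ⟨1, ?_⟩
      rw [pow_one, heq]
      exact Ideal.mul_mem_left _ _ (Ideal.subset_span (Set.mem_image_of_mem g hbB))
    · have hsupp : (map ι f').support = h.support := by
        rw [hf'K, ← smul_eq_C_mul]
        exact MvPolynomial.support_smul_eq hιt h
      have hmd : mdeg mo (map ι f') = mdeg mo h := mdeg_support_congr mo hsupp
      have hlt : mo.toSyn (mdeg mo (map ι f')) < δ := by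
        rw [hmd, ← hδ]
        exact hstrict _ (coeff_mdeg_ne_zero mo hh0)
      have hf'J : map ι f' ∈ J := by rw [hf'K]; exact Ideal.mul_mem_left _ _ hhJ
      obtain ⟨n, hn⟩ := IH _ hlt f' hf'J rfl
      refine ⟨n + 1, ?_⟩
      have hsplit : t ^ (n + 1) • f = t ^ n • f' + t ^ n • (monomial e a * g b) := by
        have h2 : t • f = f' + monomial e a * g b := by rw [hf', sub_add_cancel]
        rw [pow_succ, mul_smul, h2, smul_add]
      rw [hsplit]
      exact Submodule.add_mem _ hn (Submodule.smul_of_tower_mem _ _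
        (Ideal.mul_mem_left _ _ (Ideal.subset_span (Set.mem_image_of_mem g hbB))))

end Helpers5
noncomputable section Helpers2

variable {σ : Type*} {R : Type*} [CommRing R] [IsDomain R] {K : Type*} [Field K]
  [Algebra R K] [IsFractionRing R K]

/-- clear denominators of a polynomial over the fraction field -/
lemma exists_denominator (c : MvPolynomial σ K) :
    ∃ t : R, t ≠ 0 ∧ ∃ e : MvPolynomial σ R,
      map (algebraMap R K) e = C (algebraMap R K t) * c := by
  classical
  obtain ⟨b, hb⟩ := IsLocalization.exist_integer_multiples (nonZeroDivisors R)
    c.support (fun s => coeff s c)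
  choose w hw using fun (s : σ →₀ ℕ) (hs : s ∈ c.support) => hb s hs
  refine ⟨(b : R), nonZeroDivisors.coe_ne_zero b, ∑ s ∈ c.support.attach, monomial s.1 (w s.1 s.2), ?_⟩
  rw [map_sum]
  conv_rhs => rw [c.as_sum]
  rw [Finset.mul_sum, ← Finset.sum_attach c.support (fun s => C ((algebraMap R K) ↑b) * (monomial s) (coeff s c))]
  refine Finset.sum_congr rfl (fun s _ => ?_)
  rw [map_monomial, C_mul_monomial, hw s.1 s.2]
  congr 1
  rw [Algebra.smul_def]

/-- clear denominators in an ideal membership over the fraction field -/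
lemma exists_denominator_mem {I : Ideal (MvPolynomial σ R)}
    {w : MvPolynomial σ K} (hw : w ∈ I.map (map (algebraMap R K) : MvPolynomial σ R →+* MvPolynomial σ K)) :
    ∃ (s : R) (v : MvPolynomial σ R), s ≠ 0 ∧ v ∈ I ∧
      map (algebraMap R K) v = C (algebraMap R K s) * w := by
  classical
  rw [Ideal.map, Ideal.span, Submodule.mem_span_set] at hw
  obtain ⟨c, hcsupp, hcsum⟩ := hw
  choose u hu1 hu2 using fun (g : MvPolynomial σ K) (hg : g ∈ c.support) => hcsupp hg
  choose t ht e he using fun (g : MvPolynomial σ K) => exists_denominator (R := R) (c g)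
  refine ⟨∏ g ∈ c.support, t g,
    ∑ g ∈ c.support.attach, ((∏ g' ∈ c.support.erase g.1, t g') • (e g.1 * u g.1 g.2)),
    Finset.prod_ne_zero_iff.mpr (fun g _ => ht g), ?_, ?_⟩
  · refine Ideal.sum_mem _ (fun g _ => ?_)
    rw [smul_eq_C_mul]
    exact Ideal.mul_mem_left _ _ (Ideal.mul_mem_left _ _ (hu1 g.1 g.2))
  · rw [map_sum]
    have key : C ((algebraMap R K) (∏ g ∈ c.support, t g)) * w
        = ∑ g ∈ c.support.attach, C ((algebraMap R K) (∏ g' ∈ c.support, t g')) * (c g.1 * g.1) := by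
      rw [← hcsum, Finsupp.sum, ← Finset.sum_attach c.support (fun mi => c mi • mi),
        Finset.mul_sum]
      exact Finset.sum_congr rfl (fun g _ => by rw [smul_eq_mul])
    rw [key]
    refine Finset.sum_congr rfl (fun g _ => ?_)
    calc map (algebraMap R K) ((∏ g' ∈ c.support.erase g.1, t g') • (e g.1 * u g.1 g.2))
        = C ((algebraMap R K) (∏ g' ∈ c.support.erase g.1, t g'))
            * (map (algebraMap R K) (e g.1) * map (algebraMap R K) (u g.1 g.2)) := by
          rw [smul_eq_C_mul, map_mul, map_mul, map_C]
      _ = C ((algebraMap R K) (∏ g' ∈ c.support.erase g.1, t g'))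
            * ((C ((algebraMap R K) (t g.1)) * c g.1) * g.1) := by rw [he, hu2]
      _ = C ((algebraMap R K) (t g.1 * ∏ g' ∈ c.support.erase g.1, t g')) * (c g.1 * g.1) := by
          rw [map_mul, C_mul]; ring
      _ = C ((algebraMap R K) (∏ g' ∈ c.support, t g')) * (c g.1 * g.1) := by
          rw [Finset.mul_prod_erase _ t g.2]

end Helpers2
noncomputable section Helpers3

variable {σ : Type*} {K : Type*} [Field K] {Ω : Type*} [Field Ω] [Algebra K Ω]

variable (π : Ω →ₗ[K] K)

/-- apply a linear retraction coefficientwise -/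
noncomputable def piMap (w : MvPolynomial σ Ω) : MvPolynomial σ K :=
  ∑ s ∈ w.support, monomial s (π (coeff s w))

lemma coeff_piMap (w : MvPolynomial σ Ω) (u : σ →₀ ℕ) :
    coeff u (piMap π w) = π (coeff u w) := by
  classical
  rw [piMap, MvPolynomial.coeff_sum]
  simp only [coeff_monomial]
  rw [Finset.sum_ite_eq' w.support u (fun s => π (coeff s w))]
  by_cases h : u ∈ w.support
  · simp [h]
  · simp [h, MvPolynomial.notMem_support_iff.mp h]

lemma piMap_map (h : MvPolynomial σ K) (hπ : ∀ k : K, π (algebraMap K Ω k) = k) :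
    piMap π (map (algebraMap K Ω) h) = h := by
  apply MvPolynomial.ext
  intro u
  rw [coeff_piMap, coeff_map, hπ]

lemma piMap_mul_map (c : MvPolynomial σ Ω) (h : MvPolynomial σ K) :
    piMap π (c * map (algebraMap K Ω) h) = piMap π c * h := by
  classical
  apply MvPolynomial.ext
  intro u
  rw [coeff_piMap, MvPolynomial.coeff_mul, MvPolynomial.coeff_mul, map_sum]
  refine Finset.sum_congr rfl (fun x _ => ?_)
  rw [coeff_piMap, coeff_map]
  calc π (coeff x.1 c * (algebraMap K Ω) (coeff x.2 h))
      = π ((coeff x.2 h) • (coeff x.1 c)) := by rw [Algebra.smul_def]; ring_nf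
    _ = (coeff x.2 h) • π (coeff x.1 c) := map_smul π _ _
    _ = π (coeff x.1 c) * coeff x.2 h := by rw [smul_eq_mul, mul_comm]

lemma piMap_mem_of_mem_map {A : Ideal (MvPolynomial σ K)} {w : MvPolynomial σ Ω}
    (hw : w ∈ A.map (map (algebraMap K Ω) : MvPolynomial σ K →+* MvPolynomial σ Ω)) :
    piMap π w ∈ A := by
  classical
  rw [Ideal.map, Ideal.span, Submodule.mem_span_set] at hw
  obtain ⟨c, hcsupp, hcsum⟩ := hw
  choose v hv1 hv2 using fun (g : MvPolynomial σ Ω) (hg : g ∈ c.support) => hcsupp hg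
  have hadd : ∀ {α : Type _} (s : Finset α) (f : α → MvPolynomial σ Ω),
      piMap π (∑ g ∈ s, f g) = ∑ g ∈ s, piMap π (f g) := by
    intro α s f
    apply MvPolynomial.ext
    intro u
    rw [coeff_piMap, MvPolynomial.coeff_sum, MvPolynomial.coeff_sum, map_sum]
    exact Finset.sum_congr rfl (fun g _ => (coeff_piMap π _ u).symm)
  rw [← hcsum, Finsupp.sum, ← Finset.sum_attach c.support (fun mi => c mi • mi), hadd]
  refine Ideal.sum_mem _ (fun g _ => ?_)
  rw [smul_eq_mul, ← hv2 g.1 g.2, piMap_mul_map]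
  exact Ideal.mul_mem_left _ _ (hv1 g.1 g.2)

/-- existence of a retraction -/
lemma exists_retraction : ∃ π : Ω →ₗ[K] K, ∀ k : K, π (algebraMap K Ω k) = k := by
  obtain ⟨π, hπ⟩ := (Algebra.linearMap K Ω).exists_leftInverse_of_injective
    (LinearMap.ker_eq_bot.mpr (algebraMap K Ω).injective)
  exact ⟨π, fun k => by simpa using LinearMap.congr_fun hπ k⟩

end Helpers3

section Main

open MvPolynomial

lemma zeroSet_eq_zeroLocus {R F : Type*} [CommRing R] [Field F] {m : ℕ}
    (I : Ideal (MvPolynomial (Fin m) R)) (ρ : R →+* F) :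
    zeroSet I ρ = MvPolynomial.zeroLocus F (I.map (map ρ : MvPolynomial (Fin m) R →+* MvPolynomial (Fin m) F)) := by
  ext x
  simp only [zeroSet, Set.mem_setOf_eq, MvPolynomial.mem_zeroLocus_iff, MvPolynomial.aeval_eq_eval]
  constructor
  · intro h q hq
    have hle : I.map (map ρ : MvPolynomial (Fin m) R →+* MvPolynomial (Fin m) F)
        ≤ RingHom.ker (MvPolynomial.eval x : MvPolynomial (Fin m) F →+* F) :=
      Ideal.map_le_iff_le_comap.mpr (fun v hv => by
        rw [Ideal.mem_comap, RingHom.mem_ker]; exact h v hv)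
    exact RingHom.mem_ker.mp (hle hq)
  · intro h q hq
    exact h _ (Ideal.mem_map_of_mem _ hq)

theorem aux_spread {R : Type*} [CommRing R] [IsDomain R] {m : ℕ}
    (I : Ideal (MvPolynomial (Fin m) R))
    (K : Type*) [Field K] [Algebra R K] [IsFractionRing R K]
    (Ω : Type*) [Field Ω] [Algebra K Ω] [IsAlgClosed Ω] :
    ∃ r : R, r ≠ 0 ∧ ∀ f : MvPolynomial (Fin m) R,
      (∀ x ∈ zeroSet I ((algebraMap K Ω).comp (algebraMap R K)),
        eval x (map ((algebraMap K Ω).comp (algebraMap R K)) f) = 0) →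
      ∀ {F : Type*} [Field F] (ψ : R →+* F) (p : Ideal R), p.IsPrime →
        (∀ s : R, ψ s = 0 → s ∈ p) → r ∉ p →
        ∀ x ∈ zeroSet I ψ, eval x (map ψ f) = 0 := by
  classical
  set ι : R →+* K := algebraMap R K with hι
  set κ : K →+* Ω := algebraMap K Ω with hκ
  set A : Ideal (MvPolynomial (Fin m) K) :=
    I.map (map ι : MvPolynomial (Fin m) R →+* MvPolynomial (Fin m) K) with hA
  set AΩ : Ideal (MvPolynomial (Fin m) Ω) :=
    I.map (map (κ.comp ι) : MvPolynomial (Fin m) R →+* MvPolynomial (Fin m) Ω) with hAΩ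
  have hcompmap : ∀ v : MvPolynomial (Fin m) R, map (κ.comp ι) v = map κ (map ι v) :=
    fun v => (map_map ι κ v).symm
  have hAΩmap : AΩ = A.map (map κ : MvPolynomial (Fin m) K →+* MvPolynomial (Fin m) Ω) := by
    rw [hA, hAΩ, Ideal.map_map]
    congr 1
    exact RingHom.ext fun v => hcompmap v
  set J : Ideal (MvPolynomial (Fin m) K) :=
    AΩ.radical.comap (map κ : MvPolynomial (Fin m) K →+* MvPolynomial (Fin m) Ω) with hJ
  set mo : MonomialOrder (Fin m) := MonomialOrder.lex with hmo
  obtain ⟨B, hB, hcover⟩ := exists_groebner_cover mo J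
  choose tB htB eB heB using
    fun b : MvPolynomial (Fin m) K => exists_denominator (R := R) (K := K) b
  set t : R := ∏ b ∈ B, tB b with htdef
  have ht0 : t ≠ 0 := Finset.prod_ne_zero_iff.mpr fun b _ => htB b
  set g : MvPolynomial (Fin m) K → MvPolynomial (Fin m) R :=
    fun b => (∏ b' ∈ B.erase b, tB b') • eB b with hgdef
  have hg : ∀ b ∈ B, map ι (g b) = C (ι t) * b := by
    intro b hb
    rw [hgdef]
    simp only
    rw [smul_eq_C_mul, map_mul, map_C, heB b, ← mul_assoc, ← C_mul, ← map_mul ι,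
      Finset.prod_erase_mul _ _ hb]
  obtain ⟨π, hπ⟩ := exists_retraction (K := K) (Ω := Ω)
  have hginj : Function.Injective (map ι : MvPolynomial (Fin m) R →+* MvPolynomial (Fin m) K) :=
    MvPolynomial.map_injective ι (IsFractionRing.injective R K)
  have hkey : ∀ b ∈ B, ∃ (nb : ℕ) (sb : R), sb ≠ 0 ∧ sb • (g b) ^ nb ∈ I := by
    intro b hb
    obtain ⟨hbJ, _⟩ := hB b hb
    rw [hJ, Ideal.mem_comap] at hbJ
    obtain ⟨nb, hnb⟩ := Ideal.mem_radical_iff.mp hbJ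
    have hw : map κ (map ι ((g b) ^ nb)) ∈ AΩ := by
      rw [map_pow, hg b hb, map_pow, map_mul, map_C, mul_pow]
      exact Ideal.mul_mem_left _ _ hnb
    have hmem : map ι ((g b) ^ nb) ∈ A := by
      have h2 : piMap π (map κ (map ι ((g b) ^ nb))) ∈ A :=
        piMap_mem_of_mem_map π (by rw [← hAΩmap]; exact hw)
      rwa [piMap_map π _ hπ] at h2
    obtain ⟨sb, v, hsb0, hvI, hveq⟩ := exists_denominator_mem (I := I) hmem
    refine ⟨nb, sb, hsb0, ?_⟩
    have heq2 : map ι (sb • (g b) ^ nb) = map ι v := by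
      rw [smul_eq_C_mul, map_mul, map_C, hveq]
    rw [hginj heq2]
    exact hvI
  choose nB sB hsB0 hsBI using hkey
  refine ⟨t * ∏ b ∈ B.attach, sB b.1 b.2,
    mul_ne_zero ht0 (Finset.prod_ne_zero_iff.mpr fun b _ => hsB0 b.1 b.2), ?_⟩
  intro f hvan F _ ψ p hp hψker hrp x hx
  have hfJ : map ι f ∈ J := by
    rw [hJ, Ideal.mem_comap, ← hcompmap,
      ← MvPolynomial.vanishingIdeal_zeroLocus_eq_radical (K := Ω) AΩ]
    simp only [MvPolynomial.mem_vanishingIdeal_iff, MvPolynomial.aeval_eq_eval]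
    intro y hy
    apply hvan
    rw [zeroSet_eq_zeroLocus]
    exact hy
  obtain ⟨n, hdiv⟩ := division_lemma mo J B hB hcover t ht0 g hg f hfJ
  have htp : t ∉ p := fun hmem => hrp (Ideal.mul_mem_right _ _ hmem)
  have hsp : ∀ b (hb : b ∈ B), sB b hb ∉ p := by
    intro b hb hmem
    obtain ⟨c, hc⟩ := Finset.dvd_prod_of_mem (fun u : {y // y ∈ B} => sB u.1 u.2)
      (Finset.mem_attach B ⟨b, hb⟩)
    refine hrp ?_
    rw [hc]
    exact Ideal.mul_mem_left _ _ (Ideal.mul_mem_right _ _ hmem)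
  have hψt : ∀ s : R, s ∉ p → ψ s ≠ 0 := fun s hs h0 => hs (hψker s h0)
  have hxmem : ∀ v ∈ I, eval x (map ψ v) = 0 := hx
  have heval_g : ∀ b (hb : b ∈ B), eval x (map ψ (g b)) = 0 := by
    intro b hb
    have h0 := hxmem _ (hsBI b hb)
    rw [smul_eq_C_mul, map_mul, map_C, map_pow, map_mul, eval_C, map_pow] at h0
    have hpow : (eval x (map ψ (g b))) ^ (nB b hb) = 0 := by
      rcases mul_eq_zero.mp h0 with h | h
      · exact absurd h (hψt _ (hsp b hb))
      · exact h
    rcases Nat.eq_zero_or_pos (nB b hb) with h | h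
    · rw [h, pow_zero] at hpow
      exact absurd hpow one_ne_zero
    · exact (pow_eq_zero_iff h.ne').mp hpow
  have hsum : eval x (map ψ ((t ^ n : R) • f)) = 0 := by
    obtain ⟨c, hcs, hcsum⟩ := Submodule.mem_span_set.mp hdiv
    rw [← hcsum, Finsupp.sum, map_sum, map_sum]
    refine Finset.sum_eq_zero fun u hu => ?_
    obtain ⟨b, hbB, rfl⟩ := hcs hu
    rw [smul_eq_mul, map_mul, map_mul, heval_g b hbB, mul_zero]
  rw [smul_eq_C_mul, map_mul, map_C, map_mul, eval_C] at hsum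
  rcases mul_eq_zero.mp hsum with h | h
  · refine absurd h ?_
    rw [map_pow]
    exact pow_ne_zero _ (hψt t htp)
  · exact h

end Main

/-- Let `R` be a domain with fraction field `K`, and let `X` be a closed subset of affine
`m`-space over `R` with vanishing ideal `I ⊆ R[x_1,...,x_m]`.  Then there is a nonzero `r ∈ R`
such that for every `f ∈ R[x_1,...,x_m]`: if `f` vanishes identically on `X(K̄)`, then `f`
vanishes identically on `X(K̄_p)` for every prime `p` of `R[1/r]` (i.e. every prime of `R` not
containing `r`). -/
theorem vanishing_spreads_out (R : Type*) [CommRing R] [IsDomain R] (m : ℕ)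
    (I : Ideal (MvPolynomial (Fin m) R)) :
    ∃ r : R, r ≠ 0 ∧ ∀ f : MvPolynomial (Fin m) R,
      (∀ x ∈ zeroSet I
          ((algebraMap (FractionRing R) (AlgebraicClosure (FractionRing R))).comp
            (algebraMap R (FractionRing R))),
        MvPolynomial.eval x (MvPolynomial.map
          ((algebraMap (FractionRing R) (AlgebraicClosure (FractionRing R))).comp
            (algebraMap R (FractionRing R))) f) = 0) →
      ∀ (p : Ideal R) [p.IsPrime], r ∉ p →
        ∀ x ∈ zeroSet I
            ((algebraMap (FractionRing (R ⧸ p))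
                (AlgebraicClosure (FractionRing (R ⧸ p)))).comp
              ((algebraMap (R ⧸ p) (FractionRing (R ⧸ p))).comp (Ideal.Quotient.mk p))),
          MvPolynomial.eval x (MvPolynomial.map
            ((algebraMap (FractionRing (R ⧸ p))
                (AlgebraicClosure (FractionRing (R ⧸ p)))).comp
              ((algebraMap (R ⧸ p) (FractionRing (R ⧸ p))).comp (Ideal.Quotient.mk p))) f)
            = 0 := by
  obtain ⟨r, hr0, hr⟩ := aux_spread I (FractionRing R) (AlgebraicClosure (FractionRing R))
  refine ⟨r, hr0, ?_⟩
  intro f hvan p hp hrp x hx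
  haveI := hp
  refine hr f hvan
    ((algebraMap (FractionRing (R ⧸ p)) (AlgebraicClosure (FractionRing (R ⧸ p)))).comp
      ((algebraMap (R ⧸ p) (FractionRing (R ⧸ p))).comp (Ideal.Quotient.mk p)))
    p hp ?_ hrp x hx
  intro s hs
  have hinj2 : Function.Injective
      (algebraMap (FractionRing (R ⧸ p)) (AlgebraicClosure (FractionRing (R ⧸ p)))) :=
    (algebraMap (FractionRing (R ⧸ p)) (AlgebraicClosure (FractionRing (R ⧸ p)))).injective
  have h1 : (algebraMap (R ⧸ p) (FractionRing (R ⧸ p))) (Ideal.Quotient.mk p s) = 0 := by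
    apply hinj2
    rw [map_zero]
    exact hs
  have h2 : Ideal.Quotient.mk p s = 0 := by
    apply IsFractionRing.injective (R ⧸ p) (FractionRing (R ⧸ p))
    rw [map_zero]
    exact h1
  exact (Ideal.Quotient.eq_zero_iff_mem).mp h2
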